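/- For all nonnegative real numbers q, r, s and all λ, μ > 0 with λ + μ < 1, one has (q² + r² + s²)^{p/2} ≤ (1 - λ - μ)^{1-p} q^p + λ^{1-p} r^p + μ^{1-p} s^p, for any real p > 1. -/

import Mathlib

lemma aux_two (p a b t : ℝ) (hp : 1 < p) (ha : 0 ≤ a) (hb : 0 ≤ b) (ht0 : 0 < t)
    (ht1 : t < 1) : (a + b) ^ p ≤ (1 - t) ^ (1 - p) * a ^ p + t ^ (1 - p) * b ^ p := by
  have h1t : (0:ℝ) < 1 - t := by linarith
  have hcv := (convexOn_rpow hp.le).2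
    (show a / (1 - t) ∈ Set.Ici (0:ℝ) from div_nonneg ha h1t.le)
    (show b / t ∈ Set.Ici (0:ℝ) from div_nonneg hb ht0.le)
    (by linarith : (0:ℝ) ≤ 1 - t) ht0.le (by ring)
  simp only [smul_eq_mul] at hcv
  have e1 : (1 - t) * (a / (1 - t)) + t * (b / t) = a + b := by field_simp
  rw [e1] at hcv
  refine hcv.trans (le_of_eq ?_)
  rw [Real.div_rpow ha h1t.le, Real.div_rpow hb ht0.le,
    Real.rpow_sub h1t, Real.rpow_sub ht0, Real.rpow_one, Real.rpow_one]
  ring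

theorem stmt1 (p q r s l m : ℝ) (hp : 1 < p) (hq : 0 ≤ q) (hr : 0 ≤ r) (hs : 0 ≤ s)
    (hl : 0 < l) (hm : 0 < m) (hlm : l + m < 1) :
    (q ^ 2 + r ^ 2 + s ^ 2) ^ (p / 2) ≤
      (1 - l - m) ^ (1 - p) * q ^ p + l ^ (1 - p) * r ^ p + m ^ (1 - p) * s ^ p := by
  have hqrs : (0:ℝ) ≤ q + r + s := by linarith
  have hlm0 : (0:ℝ) < l + m := by linarith
  have step1 : (q ^ 2 + r ^ 2 + s ^ 2) ^ (p / 2) ≤ (q + r + s) ^ p := by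
    have h1 : (q ^ 2 + r ^ 2 + s ^ 2) ^ (p / 2) ≤ ((q + r + s) ^ 2) ^ (p / 2) := by
      apply Real.rpow_le_rpow (by positivity) (by nlinarith) (by linarith)
    have h2 : ((q + r + s) ^ 2) ^ (p / 2) = (q + r + s) ^ p := by
      rw [← Real.rpow_natCast (q + r + s) 2, ← Real.rpow_mul hqrs]
      rw [Nat.cast_ofNat]; congr 1; ring
    rw [h2] at h1; exact h1
  have step2 : (q + (r + s)) ^ p ≤
      (1 - (l + m)) ^ (1 - p) * q ^ p + (l + m) ^ (1 - p) * (r + s) ^ p :=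
    aux_two p q (r + s) (l + m) hp hq (by linarith) hlm0 hlm
  have step3 : (r + s) ^ p ≤
      (l / (l + m)) ^ (1 - p) * r ^ p + (m / (l + m)) ^ (1 - p) * s ^ p := by
    have := aux_two p r s (m / (l + m)) hp hr hs (by positivity)
      (by rw [div_lt_one hlm0]; linarith)
    have e : 1 - m / (l + m) = l / (l + m) := by field_simp; ring
    rwa [e] at this
  have hw : (0:ℝ) ≤ (l + m) ^ (1 - p) := Real.rpow_nonneg hlm0.le _
  have step4 : (l + m) ^ (1 - p) * (r + s) ^ p ≤ l ^ (1 - p) * r ^ p + m ^ (1 - p) * s ^ p := by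
    have h := mul_le_mul_of_nonneg_left step3 hw
    calc (l + m) ^ (1 - p) * (r + s) ^ p
        ≤ (l + m) ^ (1 - p) * ((l / (l + m)) ^ (1 - p) * r ^ p
            + (m / (l + m)) ^ (1 - p) * s ^ p) := h
      _ = ((l + m) ^ (1 - p) * (l / (l + m)) ^ (1 - p)) * r ^ p
            + ((l + m) ^ (1 - p) * (m / (l + m)) ^ (1 - p)) * s ^ p := by ring
      _ = l ^ (1 - p) * r ^ p + m ^ (1 - p) * s ^ p := by
          rw [← Real.mul_rpow hlm0.le (by positivity), ← Real.mul_rpow hlm0.le (by positivity)]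
          rw [mul_div_cancel₀ _ hlm0.ne', mul_div_cancel₀ _ hlm0.ne']
  have e5 : (1 - (l + m)) = 1 - l - m := by ring
  calc (q ^ 2 + r ^ 2 + s ^ 2) ^ (p / 2) ≤ (q + r + s) ^ p := step1
    _ = (q + (r + s)) ^ p := by ring_nf
    _ ≤ (1 - (l + m)) ^ (1 - p) * q ^ p + (l + m) ^ (1 - p) * (r + s) ^ p := step2
    _ ≤ (1 - (l + m)) ^ (1 - p) * q ^ p + (l ^ (1 - p) * r ^ p + m ^ (1 - p) * s ^ p) := by
        linarith [step4]
    _ = (1 - l - m) ^ (1 - p) * q ^ p + l ^ (1 - p) * r ^ p + m ^ (1 - p) * s ^ p := by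
        rw [e5]; ring
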